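/- Let G be a finite bipartite graph and suppose B ∪ W = X ⊎ Y where X and Y are nonempty and nonadjacent. Then D(G) = Dom( D(X) ∪ D(Y) ∪ {(0, |W|), (|B|, 0)} ). -/
import Mathlib


open Finset

/-- A finite bipartite graph: black vertices `B`, white vertices `W` (disjoint finite sets),
and an edge set `E ⊆ B × W`. -/
structure BipGraph (V : Type) [DecidableEq V] where
  B : Finset V
  W : Finset V
  disj : Disjoint B W
  E : Set (V × V)
  E_sub : ∀ e ∈ E, e.1 ∈ B ∧ e.2 ∈ W

variable {V : Type} [DecidableEq V]

/-- `(S, T)` is a biclique of `G`. -/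
def IsBiclique (G : BipGraph V) (S T : Finset V) : Prop :=
  S ⊆ G.B ∧ T ⊆ G.W ∧ ∀ b ∈ S, ∀ w ∈ T, (b, w) ∈ G.E

/-- `(b, w)` is a bisize of `G`: `G` contains a biclique of size `(b, w)`. -/
def Bisize (G : BipGraph V) (p : ℕ × ℕ) : Prop :=
  ∃ S T, IsBiclique G S T ∧ S.card = p.1 ∧ T.card = p.2

/-- `Dominates p q` : `p` dominates `q`, i.e. `q.1 ≤ p.1` and `q.2 ≤ p.2`. -/
def Dominates (p q : ℕ × ℕ) : Prop := q.1 ≤ p.1 ∧ q.2 ≤ p.2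

/-- A maxbisize of `G` : a bisize not strictly dominated by another bisize. -/
def MaxBisize (G : BipGraph V) (p : ℕ × ℕ) : Prop :=
  Bisize G p ∧ ∀ q, Bisize G q → Dominates q p → q = p

/-- `DD G` is the set of maxbisizes of `G` (denoted `D(G)` in the paper). -/
def DD (G : BipGraph V) : Set (ℕ × ℕ) := {p | MaxBisize G p}

/-- `Dom X` : the elements of `X` not strictly dominated by another element of `X`. -/
def Dom (X : Set (ℕ × ℕ)) : Set (ℕ × ℕ) := {p ∈ X | ∀ q ∈ X, Dominates q p → q = p}

/-- The induced subgraph `G[M]`. -/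
def induce (G : BipGraph V) (M : Finset V) : BipGraph V where
  B := G.B ∩ M
  W := G.W ∩ M
  disj := G.disj.mono inter_subset_left inter_subset_left
  E := {e ∈ G.E | e.1 ∈ M ∧ e.2 ∈ M}
  E_sub := fun e he =>
    ⟨mem_inter.mpr ⟨(G.E_sub e he.1).1, he.2.1⟩, mem_inter.mpr ⟨(G.E_sub e he.1).2, he.2.2⟩⟩

/-- `X` is nonadjacent to `Y` : no vertex of `X` is adjacent to a vertex of `Y`. -/
def Nonadj (G : BipGraph V) (X Y : Finset V) : Prop :=
  ∀ x ∈ X, ∀ y ∈ Y, (x, y) ∉ G.E ∧ (y, x) ∉ G.E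

/-- `X` is fully adjacent to `Y` : every black vertex of `X` is adjacent to every white
vertex of `Y` and every white vertex of `X` is adjacent to every black vertex of `Y`. -/
def FullyAdj (G : BipGraph V) (X Y : Finset V) : Prop :=
  (∀ b ∈ X ∩ G.B, ∀ w ∈ Y ∩ G.W, (b, w) ∈ G.E) ∧
  (∀ b ∈ Y ∩ G.B, ∀ w ∈ X ∩ G.W, (b, w) ∈ G.E)

/-- `X` is left adjacent to `Y` : every black vertex of `X` is adjacent to every white
vertex of `Y` and no white vertex of `X` is adjacent to a black vertex of `Y`. -/
def LeftAdj (G : BipGraph V) (X Y : Finset V) : Prop :=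
  (∀ b ∈ X ∩ G.B, ∀ w ∈ Y ∩ G.W, (b, w) ∈ G.E) ∧
  (∀ b ∈ Y ∩ G.B, ∀ w ∈ X ∩ G.W, (b, w) ∉ G.E)

open Classical in
/-- `X ⊕ Y` with the convention `∅ ⊕ X = X ⊕ ∅ = X`. -/
noncomputable def oplus (X Y : Set (ℕ × ℕ)) : Set (ℕ × ℕ) :=
  if X = ∅ then Y else if Y = ∅ then X
  else {p | ∃ x ∈ X, ∃ y ∈ Y, p = x + y}

/-- `→_w^z X`. -/
def shiftW (z : ℕ) (X : Set (ℕ × ℕ)) : Set (ℕ × ℕ) := {p | ∃ q ∈ X, p = (q.1, q.2 + z)}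

/-- `→_b^z X`. -/
def shiftB (z : ℕ) (X : Set (ℕ × ℕ)) : Set (ℕ × ℕ) := {p | ∃ q ∈ X, p = (q.1 + z, q.2)}

/-- A bimodule of `G`. -/
def Bimodule (G : BipGraph V) (M : Finset V) : Prop :=
  M ⊆ G.B ∪ G.W ∧ ∀ v ∈ (G.B ∪ G.W) \ M, Nonadj G {v} M ∨ FullyAdj G {v} M

/-- The quotient graph of `G` by a family `M` of bimodules: vertex `(i, true)` is the
black vertex `bᵢ` (present when `Mᵢ ∩ B ≠ ∅`), `(i, false)` the white vertex `wᵢ`. -/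
def quotientGraph (G : BipGraph V) {k : ℕ} (M : Fin k → Finset V) :
    BipGraph (Fin k × Bool) where
  B := Finset.univ.filter fun p => p.2 = true ∧ (M p.1 ∩ G.B).Nonempty
  W := Finset.univ.filter fun p => p.2 = false ∧ (M p.1 ∩ G.W).Nonempty
  disj := by
    rw [Finset.disjoint_left]
    intro p hp hq
    simp only [Finset.mem_filter, Finset.mem_univ, true_and] at hp hq
    rw [hp.1] at hq
    exact Bool.noConfusion hq.1
  E := {e | e.1.2 = true ∧ e.2.2 = false ∧
       ∃ x ∈ M e.1.1 ∩ G.B, ∃ y ∈ M e.2.1 ∩ G.W, (x, y) ∈ G.E}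
  E_sub := fun e he => by
    obtain ⟨h1, h2, x, hx, y, hy, _⟩ := he
    constructor <;> simp only [Finset.mem_filter, Finset.mem_univ, true_and]
    · exact ⟨h1, ⟨x, hx⟩⟩
    · exact ⟨h2, ⟨y, hy⟩⟩

/-- `Rroc S` for a set `S` of vertices of the quotient graph. -/
def Rroc (G : BipGraph V) {k : ℕ} (M : Fin k → Finset V)
    (S : Finset (Fin k × Bool)) : Finset V :=
  S.biUnion fun p => if p.2 then M p.1 ∩ G.B else M p.1 ∩ G.W

/-- `Corr S` for a set `S` of vertices of `G`. -/
def Corr (G : BipGraph V) {k : ℕ} (M : Fin k → Finset V) (C : Finset V) :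
    Finset (Fin k × Bool) :=
  Finset.univ.filter fun p =>
    if p.2 then (C ∩ M p.1 ∩ G.B).Nonempty else (C ∩ M p.1 ∩ G.W).Nonempty

/-- `C` is the vertex set of a biclique of `G`. -/
def IsBicliqueVS (G : BipGraph V) (C : Finset V) : Prop :=
  ∃ S T, IsBiclique G S T ∧ S ∪ T = C

/-- `C` is the vertex set of a maximal biclique of `G`. -/
def MaximalBicliqueVS (G : BipGraph V) (C : Finset V) : Prop :=
  IsBicliqueVS G C ∧ ∀ D, IsBicliqueVS G D → C ⊆ D → C = D

/-- `D_C(Mᵢ)`, the maxbisize set of the bimodule `Mᵢ` with respect to a maximal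
biclique `C` of the quotient graph. -/
def DC (G : BipGraph V) {k : ℕ} (M : Fin k → Finset V)
    (C : Finset (Fin k × Bool)) (i : Fin k) : Set (ℕ × ℕ) :=
  if (i, true) ∈ C then
    if (i, false) ∈ C then DD (induce G (M i))
    else {((M i ∩ G.B).card, 0)}
  else
    if (i, false) ∈ C then {(0, (M i ∩ G.W).card)}
    else ∅

/-- `f 0 ⊕ f 1 ⊕ … ⊕ f (k-1)` (with the convention that `∅` is neutral for `⊕`). -/
noncomputable def oplusFold {k : ℕ} (f : Fin k → Set (ℕ × ℕ)) : Set (ℕ × ℕ) :=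
  (List.finRange k).foldr (fun i acc => oplus (f i) acc) ∅

/-- The path on `n` vertices `0, 1, …, n-1`, two-colored alternately; the black
vertices are those whose index has parity `r`. -/
def pathGraph (n r : ℕ) : BipGraph (Fin n) where
  B := Finset.univ.filter fun i => (i : ℕ) % 2 = r
  W := Finset.univ.filter fun i => (i : ℕ) % 2 ≠ r
  disj := by
    rw [Finset.disjoint_left]
    intro i hi hj
    simp only [Finset.mem_filter, Finset.mem_univ, true_and] at hi hj
    exact hj hi
  E := {e | (e.1 : ℕ) % 2 = r ∧ ((e.1 : ℕ) + 1 = (e.2 : ℕ) ∨ (e.2 : ℕ) + 1 = (e.1 : ℕ))}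
  E_sub := fun e he => by
    obtain ⟨h1, h2⟩ := he
    refine ⟨?_, ?_⟩ <;> simp only [Finset.mem_filter, Finset.mem_univ, true_and]
    · exact h1
    · omega

/-- The cycle on `n` vertices `0, 1, …, n-1` (consecutive vertices modulo `n` adjacent),
two-colored alternately; the black vertices are those whose index has parity `r`. -/
def cycleGraph (n r : ℕ) : BipGraph (Fin n) where
  B := Finset.univ.filter fun i => (i : ℕ) % 2 = r
  W := Finset.univ.filter fun i => (i : ℕ) % 2 ≠ r
  disj := by
    rw [Finset.disjoint_left]
    intro i hi hj
    simp only [Finset.mem_filter, Finset.mem_univ, true_and] at hi hj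
    exact hj hi
  E := {e | (e.1 : ℕ) % 2 = r ∧ (e.2 : ℕ) % 2 ≠ r ∧
       (((e.1 : ℕ) + 1) % n = (e.2 : ℕ) ∨ ((e.2 : ℕ) + 1) % n = (e.1 : ℕ))}
  E_sub := fun e he => by
    obtain ⟨h1, h2, _⟩ := he
    refine ⟨?_, ?_⟩ <;> simp only [Finset.mem_filter, Finset.mem_univ, true_and]
    · exact h1
    · exact h2

/-- The bipartite complement of `G`. -/
def bipCompl (G : BipGraph V) : BipGraph V where
  B := G.B
  W := G.W
  disj := G.disj
  E := {e | e.1 ∈ G.B ∧ e.2 ∈ G.W ∧ e ∉ G.E}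
  E_sub := fun _ he => ⟨he.1, he.2.1⟩

/-- `x` and `y` are adjacent in `G`. -/
def Adjv (G : BipGraph V) (x y : V) : Prop := (x, y) ∈ G.E ∨ (y, x) ∈ G.E

/-- `G` is twin-free: no two distinct vertices have the same set of neighbors. -/
def TwinFree (G : BipGraph V) : Prop :=
  ∀ x ∈ G.B ∪ G.W, ∀ y ∈ G.B ∪ G.W,
    ({z | Adjv G x z} = {z | Adjv G y z}) → x = y

/-- The edges of the skew star `Star_{1,2,3}`: a path `0-1-2-3-4-5` plus a vertex `6`
adjacent only to `2`. -/
def starEdges : List (ℕ × ℕ) := [(0, 1), (1, 2), (2, 3), (3, 4), (4, 5), (2, 6)]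

/-- `G` contains no induced `Star_{1,2,3}`. -/
def Star123Free (G : BipGraph V) : Prop :=
  ¬ ∃ v : Fin 7 → V, Function.Injective v ∧ (∀ i, v i ∈ G.B ∪ G.W) ∧
    ∀ i j : Fin 7, Adjv G (v i) (v j) ↔
      (((i : ℕ), (j : ℕ)) ∈ starEdges ∨ ((j : ℕ), (i : ℕ)) ∈ starEdges)

/-- Every vertex of `G` has degree at most 2 (equivalent to `K_{1,3}`-freeness for
bipartite graphs). -/
def MaxDeg2 (G : BipGraph V) : Prop :=
  ∀ x ∈ G.B ∪ G.W, ({y | Adjv G x y}).ncard ≤ 2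
lemma bisize_bound (G : BipGraph V) {p : ℕ × ℕ} (h : Bisize G p) :
    p.1 ≤ G.B.card ∧ p.2 ≤ G.W.card := by
  obtain ⟨S, T, ⟨hSB, hTW, _⟩, hS, hT⟩ := h
  exact ⟨hS ▸ card_le_card hSB, hT ▸ card_le_card hTW⟩

lemma exists_maxbisize (G : BipGraph V) {p : ℕ × ℕ} (h : Bisize G p) :
    ∃ q, MaxBisize G q ∧ Dominates q p := by
  set T : Set ℕ := {n | ∃ q, Bisize G q ∧ Dominates q p ∧ q.1 + q.2 = n} with hT
  have hne : T.Nonempty := ⟨p.1 + p.2, p, h, ⟨le_rfl, le_rfl⟩, rfl⟩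
  have hbdd : BddAbove T := ⟨G.B.card + G.W.card, by
    rintro n ⟨q, hq, _, rfl⟩
    have := bisize_bound G hq; omega⟩
  obtain ⟨q, hq, hqd, hqs⟩ := Nat.sSup_mem hne hbdd
  refine ⟨q, ⟨hq, ?_⟩, hqd⟩
  intro r hr hrd
  have hmem : r.1 + r.2 ∈ T :=
    ⟨r, hr, ⟨le_trans hqd.1 hrd.1, le_trans hqd.2 hrd.2⟩, rfl⟩
  have hle := le_csSup hbdd hmem
  rw [← hqs] at hle
  obtain ⟨h1, h2⟩ := hrd
  exact Prod.ext_iff.mpr ⟨by omega, by omega⟩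

lemma bisize_of_induce (G : BipGraph V) (M : Finset V) {p : ℕ × ℕ}
    (h : Bisize (induce G M) p) : Bisize G p := by
  obtain ⟨S, T, ⟨hSB, hTW, hE⟩, hS, hT⟩ := h
  exact ⟨S, T, ⟨hSB.trans inter_subset_left, hTW.trans inter_subset_left,
    fun b hb w hw => (hE b hb w hw).1⟩, hS, hT⟩

lemma bisize_induce_of_sub (G : BipGraph V) (X Y : Finset V)
    (hmem : ∀ v ∈ G.B ∪ G.W, v ∈ X ∨ v ∈ Y) (hadj : Nonadj G X Y)
    {S T : Finset V} (hB : IsBiclique G S T) {s t : V} (hs : s ∈ S) (hsX : s ∈ X)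
    (ht : t ∈ T) : Bisize (induce G X) (S.card, T.card) := by
  obtain ⟨hSB, hTW, hE⟩ := hB
  have hTX : ∀ w ∈ T, w ∈ X := by
    intro w hw
    rcases hmem w (mem_union_right _ (hTW hw)) with h | h
    · exact h
    · exact absurd (hE s hs w hw) (hadj s hsX w h).1
  have hSX : ∀ b ∈ S, b ∈ X := by
    intro b hb
    rcases hmem b (mem_union_left _ (hSB hb)) with h | h
    · exact h
    · exact absurd (hE b hb t ht) (hadj t (hTX t ht) b h).2
  exact ⟨S, T, ⟨fun b hb => mem_inter.mpr ⟨hSB hb, hSX b hb⟩,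
    fun w hw => mem_inter.mpr ⟨hTW hw, hTX w hw⟩,
    fun b hb w hw => ⟨hE b hb w hw, hSX b hb, hTX w hw⟩⟩, rfl, rfl⟩

/-- Parallel case, Theorem 8 of the paper. -/
theorem parallel_case {V : Type} [DecidableEq V] (G : BipGraph V) (X Y : Finset V)
    (hX : X.Nonempty) (hY : Y.Nonempty) (hdisj : Disjoint X Y)
    (hcover : X ∪ Y = G.B ∪ G.W)
    (hadj : Nonadj G X Y) :
    DD G = Dom (DD (induce G X) ∪ DD (induce G Y) ∪ {(0, G.W.card), (G.B.card, 0)}) := by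
  set A : Set (ℕ × ℕ) :=
    DD (induce G X) ∪ DD (induce G Y) ∪ {(0, G.W.card), (G.B.card, 0)} with hA
  have hmem : ∀ v ∈ G.B ∪ G.W, v ∈ X ∨ v ∈ Y := by
    intro v hv; rw [← hcover] at hv; exact mem_union.mp hv
  have hadj' : Nonadj G Y X := fun y hy x hx => ⟨(hadj x hx y hy).2, (hadj x hx y hy).1⟩
  have hmem' : ∀ v ∈ G.B ∪ G.W, v ∈ Y ∨ v ∈ X := fun v hv => (hmem v hv).symm
  -- every element of A is a bisize of G
  have hAS : ∀ a ∈ A, Bisize G a := by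
    rintro a (h | h)
    · rcases h with h | h
      · exact bisize_of_induce G X h.1
      · exact bisize_of_induce G Y h.1
    · rcases h with h | h
      · subst h
        exact ⟨∅, G.W, ⟨empty_subset _, subset_rfl,
          fun b hb => absurd hb (notMem_empty b)⟩, card_empty, rfl⟩
      · rw [Set.mem_singleton_iff] at h; subst h
        exact ⟨G.B, ∅, ⟨subset_rfl, empty_subset _,
          fun b _ w hw => absurd hw (notMem_empty w)⟩, rfl, card_empty⟩
  -- every bisize of G is dominated by an element of A
  have hcov : ∀ p, Bisize G p → ∃ a ∈ A, Dominates a p := by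
    intro p hp
    obtain ⟨hb1, hb2⟩ := bisize_bound G hp
    rcases Nat.eq_zero_or_pos p.1 with h1 | h1
    · exact ⟨(0, G.W.card), Or.inr (Or.inl rfl), by
        constructor <;> simp [h1, hb2]⟩
    rcases Nat.eq_zero_or_pos p.2 with h2 | h2
    · exact ⟨(G.B.card, 0), Or.inr (Or.inr rfl), by
        constructor <;> simp [h2, hb1]⟩
    -- the biclique lies entirely in X or in Y
    obtain ⟨S, T, hB, hS, hT⟩ := hp
    obtain ⟨s, hs⟩ := card_pos.mp (hS ▸ h1)
    obtain ⟨t, ht⟩ := card_pos.mp (hT ▸ h2)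
    have hind : Bisize (induce G X) p ∨ Bisize (induce G Y) p := by
      rcases hmem s (mem_union_left _ (hB.1 hs)) with hsX | hsY
      · left
        have := bisize_induce_of_sub G X Y hmem hadj hB hs hsX ht
        rw [hS, hT] at this; exact this
      · right
        have := bisize_induce_of_sub G Y X hmem' hadj' hB hs hsY ht
        rw [hS, hT] at this; exact this
    rcases hind with h | h
    · obtain ⟨q, hq, hqd⟩ := exists_maxbisize _ h
      exact ⟨q, Or.inl (Or.inl hq), hqd⟩
    · obtain ⟨q, hq, hqd⟩ := exists_maxbisize _ h
      exact ⟨q, Or.inl (Or.inr hq), hqd⟩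
  -- sandwich argument
  ext p
  simp only [DD, Dom, Set.mem_setOf_eq, MaxBisize]
  constructor
  · rintro ⟨hp, hmax⟩
    obtain ⟨a, haA, had⟩ := hcov p hp
    have hap : a = p := hmax a (hAS a haA) had
    subst hap
    refine ⟨haA, fun q hqA hqd => hmax q (hAS q hqA) hqd⟩
  · rintro ⟨hpA, hmax⟩
    refine ⟨hAS p hpA, fun q hq hqd => ?_⟩
    obtain ⟨a, haA, had⟩ := hcov q hq
    have hap : a = p := hmax a haA ⟨le_trans hqd.1 had.1, le_trans hqd.2 had.2⟩
    obtain ⟨h1, h2⟩ := hqd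
    obtain ⟨h3, h4⟩ := had
    rw [hap] at h3 h4
    exact Prod.ext_iff.mpr ⟨le_antisymm h3 h1, le_antisymm h4 h2⟩
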